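/- Let a, b ∈ ℝ^n with a_j b_j ≠ 0 and a_j ≠ b_j for all j, and a_j/b_j ≠ a_k/b_k for all j ≠ k. Then ∑_{j=1}^n (a_j − b_j)^n / (a_j b_j ∏_{k ≠ j} (b_k a_j − a_k b_j)) = 1/∏_{j=1}^n b_j − 1/∏_{j=1}^n a_j. -/

import Mathlib

open Finset Polynomial

lemma basis_coeff {ι : Type*} [DecidableEq ι] (s : Finset ι) (v : ι → ℝ)
    (hvs : Set.InjOn v s) {i : ι} (hi : i ∈ s) :
    (Lagrange.basis s v i).coeff (s.card - 1) = (∏ j ∈ s.erase i, (v i - v j))⁻¹ := by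
  have hdeg : (Lagrange.basis s v i).natDegree = s.card - 1 :=
    natDegree_eq_of_degree_eq_some (Lagrange.degree_basis hvs hi)
  rw [← hdeg, coeff_natDegree, Lagrange.basis, leadingCoeff_prod, ← prod_inv_distrib]
  refine prod_congr rfl fun j hj => ?_
  rw [Lagrange.basisDivisor, leadingCoeff_mul, leadingCoeff_C, leadingCoeff_X_sub_C, mul_one]

lemma key_lemma {ι : Type*} [DecidableEq ι] (s : Finset ι) (v : ι → ℝ)
    (hvs : Set.InjOn v s) (P : ℝ[X]) (hP : P.degree < s.card) :
    ∑ i ∈ s, P.eval (v i) / ∏ j ∈ s.erase i, (v i - v j) = P.coeff (s.card - 1) := by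
  conv_rhs => rw [Lagrange.eq_interpolate hvs hP]
  rw [Lagrange.interpolate_apply, finset_sum_coeff]
  refine sum_congr rfl fun i hi => ?_
  rw [coeff_C_mul, basis_coeff s v hvs hi, div_eq_mul_inv]

lemma erase_none_univ {α : Type*} [DecidableEq α] [Fintype α] :
    (univ : Finset (Option α)).erase none = univ.map Function.Embedding.some := by
  ext o; cases o <;> simp

lemma erase_some_univ {α : Type*} [DecidableEq α] [Fintype α] (j : α) :
    (univ : Finset (Option α)).erase (some j) =
      insert none ((univ.erase j).map Function.Embedding.some) := by
  ext o; cases o <;> simp [eq_comm]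

theorem stmt_10 (n : ℕ) (a b : Fin n → ℝ)
    (hab : ∀ j, a j * b j ≠ 0) (hne : ∀ j, a j ≠ b j)
    (hratio : ∀ j k, j ≠ k → a j / b j ≠ a k / b k) :
    ∑ j, (a j - b j) ^ n /
        (a j * b j * ∏ k ∈ univ.erase j, (b k * a j - a k * b j))
      = 1 / ∏ j, b j - 1 / ∏ j, a j := by
  have ha : ∀ j, a j ≠ 0 := fun j => left_ne_zero_of_mul (hab j)
  have hb : ∀ j, b j ≠ 0 := fun j => right_ne_zero_of_mul (hab j)
  set x : Fin n → ℝ := fun j => a j / b j with hx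
  have hxj : ∀ i, x i = a i / b i := fun i => rfl
  have hx0 : ∀ j, x j ≠ 0 := fun j => div_ne_zero (ha j) (hb j)
  set v : Option (Fin n) → ℝ := fun o => o.elim 0 x with hv
  have hvinj : Set.InjOn v (univ : Finset (Option (Fin n))) := by
    intro o1 _ o2 _ h
    match o1, o2 with
    | none, none => rfl
    | none, some k => exact absurd h.symm (hx0 k)
    | some k, none => exact absurd h (hx0 k)
    | some j, some k =>
      by_contra hc
      exact hratio j k (fun e => hc (by rw [e])) h
  set P : ℝ[X] := (X - C 1) ^ n with hP
  have hmon : P.Monic := (monic_X_sub_C 1).pow n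
  have hnd : P.natDegree = n := by rw [hP, natDegree_pow, natDegree_X_sub_C, mul_one]
  have hcard : (univ : Finset (Option (Fin n))).card = n + 1 := by simp
  have hdeg : P.degree < ((univ : Finset (Option (Fin n))).card : WithBot ℕ) := by
    refine lt_of_le_of_lt P.degree_le_natDegree ?_
    rw [hnd, hcard]
    exact_mod_cast Nat.lt_succ_self n
  have hkey := key_lemma univ v hvinj P hdeg
  rw [hcard] at hkey
  simp only [Nat.add_sub_cancel] at hkey
  have hcoeff : P.coeff n = 1 := by rw [← hnd]; exact hmon.coeff_natDegree
  rw [hcoeff, Fintype.sum_option] at hkey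
  set A := ∏ j, a j with hA
  set B := ∏ j, b j with hB
  have hA0 : A ≠ 0 := prod_ne_zero_iff.mpr fun j _ => ha j
  have hB0 : B ≠ 0 := prod_ne_zero_iff.mpr fun j _ => hb j
  have hnone : P.eval (v none) / ∏ k ∈ univ.erase (none : Option (Fin n)), (v none - v k)
      = B / A := by
    rw [erase_none_univ, prod_map]
    simp only [Function.Embedding.some_apply]
    have h2 : P.eval (v none) = (-1) ^ n := by simp [hP, hv]
    have e : ∀ j : Fin n, v none - v (some j) = -1 * x j := fun j => by
      show (0:ℝ) - x j = _; ring
    have h1 : ∏ j : Fin n, (v none - v (some j)) = (-1) ^ n * (A / B) := by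
      rw [prod_congr rfl fun j _ => e j, prod_mul_distrib, prod_const, card_univ,
        Fintype.card_fin]
      congr 1
      rw [hA, hB, ← prod_div_distrib]
    have hm : ((-1 : ℝ)) ^ n ≠ 0 := pow_ne_zero n (by norm_num)
    rw [h1, h2, div_mul_cancel_left₀ hm, inv_div]
  have hterm : ∀ j : Fin n,
      P.eval (v (some j)) / ∏ k ∈ univ.erase (some j), (v (some j) - v k)
      = B * ((a j - b j) ^ n /
          (a j * b j * ∏ k ∈ univ.erase j, (b k * a j - a k * b j))) := by
    intro j
    set D := ∏ k ∈ univ.erase j, (b k * a j - a k * b j) with hDdef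
    set Q := ∏ k ∈ univ.erase j, (x j - x k) with hQdef
    set E := ∏ k ∈ univ.erase j, (b j * b k) with hEdef
    have hf : ∀ k ∈ univ.erase j, b k * a j - a k * b j ≠ 0 := by
      intro k hk h0
      have hkj : k ≠ j := (mem_erase.mp hk).1
      apply hratio j k (fun e => hkj (e.symm))
      rw [div_eq_div_iff (hb j) (hb k)]
      linarith [sub_eq_zero.mp h0]
    have hD0 : D ≠ 0 := prod_ne_zero_iff.mpr hf
    have hDQE : D = Q * E := by
      rw [hQdef, hEdef, ← prod_mul_distrib]
      refine prod_congr rfl fun k hk => ?_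
      rw [hxj j, hxj k]
      field_simp [hb j, hb k]
    have hE0 : E ≠ 0 := prod_ne_zero_iff.mpr fun k _ => mul_ne_zero (hb j) (hb k)
    have hQ0 : Q ≠ 0 := by
      intro h; exact hD0 (by rw [hDQE, h, zero_mul])
    have hn1 : n - 1 + 1 = n := Nat.succ_pred_eq_of_pos j.pos
    have hE : E * b j ^ 2 = b j ^ n * B := by
      have h1 : E = b j ^ (n - 1) * ∏ k ∈ univ.erase j, b k := by
        rw [hEdef, prod_mul_distrib, prod_const, card_erase_of_mem (mem_univ j),
          card_univ, Fintype.card_fin]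
      have h2 : b j * ∏ k ∈ univ.erase j, b k = B := mul_prod_erase univ b (mem_univ j)
      calc E * b j ^ 2 = b j ^ (n - 1 + 1) * (b j * ∏ k ∈ univ.erase j, b k) := by
            rw [h1]; ring
        _ = b j ^ n * B := by rw [hn1, h2]
    have heval : P.eval (v (some j)) = (x j - 1) ^ n := by simp [hP, hv]
    have hprod : ∏ k ∈ univ.erase (some j), (v (some j) - v k) = x j * Q := by
      rw [erase_some_univ j, prod_insert (by simp), prod_map]
      simp only [Function.Embedding.some_apply]
      congr 1
      · show x j - 0 = x j; ring
    have hx1 : x j - 1 = (a j - b j) / b j := by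
      rw [hxj j, div_sub_one (hb j)]
    rw [heval, hprod, hx1, div_pow, hDQE, hxj j]
    field_simp [ha j, hb j, hQ0, hE0]
    linear_combination ((a j - b j) ^ n) * hE
  rw [hnone, sum_congr rfl fun j _ => hterm j, ← mul_sum] at hkey
  apply mul_left_cancel₀ hB0
  have : B * (1 / B - 1 / A) = 1 - B / A := by field_simp
  rw [this]
  linarith [hkey]
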